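/- Suppose G is a connected graph with λ₂(G) ≤ 1 which has neither K₅ nor K_{3,3} as a minor and whose girth equals 5, and let x₁x₂x₃x₄x₅x₁ be a 5-cycle in G. Then every vertex of G not lying on this 5-cycle is adjacent to exactly one vertex of the cycle. -/

import Mathlib

/-- The adjacency matrix of a simple graph over `ℝ` is Hermitian. -/
lemma adjMatrix_isHermitian {V : Type*} [Fintype V] (G : SimpleGraph V)
    [DecidableRel G.Adj] : ((G.adjMatrix ℝ)).IsHermitian := by
  rw [Matrix.IsHermitian, Matrix.conjTranspose_eq_transpose_of_trivial]
  exact G.isSymm_adjMatrix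

/-- The number of eigenvalues (counted with multiplicity) of the real adjacency matrix of `G`
satisfying the predicate `p`. -/
noncomputable def eigCount {V : Type*} [Fintype V] [DecidableEq V]
    (G : SimpleGraph V) (p : ℝ → Prop) : ℕ := by
  classical
  exact (Finset.univ.filter fun i =>
    p ((adjMatrix_isHermitian G).eigenvalues i)).card
/-- `HasMinor G H` : `H` is a minor of `G`, witnessed by a family of pairwise disjoint
nonempty branch sets, each inducing a connected subgraph of `G`, such that every edge of `H`
is realized by an edge of `G` between the corresponding branch sets. -/
def HasMinor {V : Type*} {W : Type*} (G : SimpleGraph V) (H : SimpleGraph W) : Prop :=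
  ∃ B : W → Set V,
    (∀ w, (B w).Nonempty) ∧
    (Pairwise fun w₁ w₂ => Disjoint (B w₁) (B w₂)) ∧
    (∀ w, (G.induce (B w)).Connected) ∧
    (∀ ⦃w₁ w₂⦄, H.Adj w₁ w₂ → ∃ a ∈ B w₁, ∃ b ∈ B w₂, G.Adj a b)

/-- `G` is planar in the sense of Wagner: it has neither `K₅` nor `K_{3,3}` as a minor. -/
def WagnerPlanar {V : Type*} (G : SimpleGraph V) : Prop :=
  ¬ HasMinor G (⊤ : SimpleGraph (Fin 5)) ∧
    ¬ HasMinor G (completeBipartiteGraph (Fin 3) (Fin 3))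
open SimpleGraph Matrix Finset

section Aux

lemma aux_no_C3 {V : Type*} {G : SimpleGraph V} (h5 : (5:ℕ∞) ≤ G.egirth)
    {a b c : V} (hab : G.Adj a b) (hbc : G.Adj b c) (hca : G.Adj c a) : False := by
  let w : G.Walk a a := Walk.cons hab (Walk.cons hbc (Walk.cons hca Walk.nil))
  have hcyc : w.IsCycle := by
    simp [w, Walk.isCycle_def, Walk.isTrail_def, hab.ne, hbc.ne, hca.ne, hab.ne',
      hbc.ne', hca.ne']
  have := le_egirth.mp h5 a w hcyc
  have hw : w.length = 3 := rfl
  rw [hw] at this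
  exact absurd this (by norm_num)

lemma aux_no_C4 {V : Type*} {G : SimpleGraph V} (h5 : (5:ℕ∞) ≤ G.egirth)
    {a b c d : V} (hac : a ≠ c) (hbd : b ≠ d)
    (hab : G.Adj a b) (hbc : G.Adj b c) (hcd : G.Adj c d) (hda : G.Adj d a) : False := by
  let w : G.Walk a a := Walk.cons hab (Walk.cons hbc (Walk.cons hcd (Walk.cons hda Walk.nil)))
  have hcyc : w.IsCycle := by
    simp [w, Walk.isCycle_def, Walk.isTrail_def, hab.ne, hbc.ne, hcd.ne, hda.ne, hab.ne',
      hbc.ne', hcd.ne', hda.ne', hac, hbd, hac.symm, hbd.symm]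
  have := le_egirth.mp h5 a w hcyc
  have hw : w.length = 4 := rfl
  rw [hw] at this
  exact absurd this (by norm_num)

lemma aux_adj_unique {V : Type*} {G : SimpleGraph V} (h5 : (5:ℕ∞) ≤ G.egirth)
    (x : Fin 5 → V) (hinj : Function.Injective x)
    (hcyc : ∀ i, G.Adj (x i) (x (i + 1))) {v : V} (hv : v ∉ Set.range x)
    {i j : Fin 5} (hi : G.Adj v (x i)) (hj : G.Adj v (x j)) : i = j := by
  by_contra hne
  have hd : j - i ≠ 0 := sub_ne_zero_of_ne (Ne.symm hne)
  have hji : i + (j - i) = j := by open Fin.CommRing in ring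
  have hvr : ∀ k : Fin 5, v ≠ x k := fun k h => hv ⟨k, h.symm⟩
  have hcases := (by decide : ∀ d : Fin 5, d ≠ 0 → d = 1 ∨ d = 2 ∨ d = 3 ∨ d = 4) (j - i) hd
  rcases hcases with h | h | h | h
  · rw [h] at hji
    exact aux_no_C3 h5 hi (hcyc i) (hji ▸ hj).symm
  · rw [h] at hji
    refine aux_no_C4 h5 (hvr (i+1)) (hinj.ne ((by decide : ∀ k : Fin 5, k ≠ k + 2) i)) hi
      (hcyc i) ?_ (hji ▸ hj).symm
    have := hcyc (i+1)
    rwa [show i + 1 + 1 = i + 2 by open Fin.CommRing in ring] at this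
  · rw [h] at hji
    have hij : j + 2 = i := by
      rw [← hji]; exact (by decide : ∀ k : Fin 5, k + 3 + 2 = k) i
    refine aux_no_C4 h5 (hvr (j+1)) (hinj.ne ((by decide : ∀ k : Fin 5, k ≠ k + 2) j)) hj
      (hcyc j) ?_ (hij ▸ hi).symm
    have := hcyc (j+1)
    rwa [show j + 1 + 1 = j + 2 by open Fin.CommRing in ring] at this
  · rw [h] at hji
    have hij : j + 1 = i := by
      rw [← hji]; exact (by decide : ∀ k : Fin 5, k + 4 + 1 = k) i
    exact aux_no_C3 h5 hj (hcyc j) (hij ▸ hi).symm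

lemma aux_walk_descent {V : Type*} {G : SimpleGraph V} (P : V → Prop) :
    ∀ {a b : V}, G.Walk a b → P a → ¬ P b →
      ∃ p q, P p ∧ G.Adj p q ∧ ¬ P q := by
  intro a b w
  induction w with
  | nil => intro h1 h2; exact absurd h1 h2
  | @cons u c d h w ih =>
      intro ha hb
      by_cases hc : P c
      · exact ih hc hb
      · exact ⟨u, c, ha, h, hc⟩

lemma key_spectral {n : Type*} [Fintype n] [DecidableEq n] {A : Matrix n n ℝ}
    (hA : A.IsHermitian) (w₁ w₂ : EuclideanSpace ℝ n)
    (hpos : ∀ a b : ℝ, ¬(a = 0 ∧ b = 0) →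
      ((a • w₁ + b • w₂ : EuclideanSpace ℝ n) : n → ℝ) ⬝ᵥ ((a • w₁ + b • w₂ : EuclideanSpace ℝ n) : n → ℝ)
        < ((a • w₁ + b • w₂ : EuclideanSpace ℝ n) : n → ℝ) ⬝ᵥ A *ᵥ ((a • w₁ + b • w₂ : EuclideanSpace ℝ n) : n → ℝ)) :
    2 ≤ (univ.filter fun i => 1 < hA.eigenvalues i).card := by
  cases isEmpty_or_nonempty n
  case inl h =>
    have := hpos 1 0 (by norm_num)
    simp [dotProduct] at this
  by_contra hlt
  push_neg at hlt
  set s := univ.filter fun i => 1 < hA.eigenvalues i with hs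
  have hcard : s.card ≤ 1 := by omega
  set b := hA.eigenvectorBasis with hb
  have hAT : Aᵀ = A := by
    rw [← Matrix.conjTranspose_eq_transpose_of_trivial]; exact hA.eq
  have repr_eq : ∀ (x : EuclideanSpace ℝ n) (i : n), b.repr x i = (b i : n → ℝ) ⬝ᵥ (x : n → ℝ) := by
    intro x i
    rw [b.repr_apply_apply]
    simp [PiLp.inner_apply, dotProduct, RCLike.inner_apply, mul_comm]
  have reprA : ∀ (x : EuclideanSpace ℝ n) (i : n),
      b.repr (WithLp.toLp 2 (A *ᵥ x)) i = hA.eigenvalues i * b.repr x i := by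
    intro x i
    rw [repr_eq, repr_eq, WithLp.ofLp_toLp]
    have h1 : (b i : n → ℝ) ⬝ᵥ (A *ᵥ x) = (A *ᵥ (b i : n → ℝ)) ⬝ᵥ x := by
      rw [Matrix.dotProduct_mulVec, ← Matrix.mulVec_transpose, hAT]
    have h2 : (A *ᵥ ((b i : n → ℝ))) = hA.eigenvalues i • ((b i : n → ℝ)) :=
      hA.mulVec_eigenvectorBasis i
    rw [h1, h2]
    simp [dotProduct, PiLp.smul_apply, Finset.mul_sum, mul_assoc]
  have hinner : ∀ y z : EuclideanSpace ℝ n,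
      (y : n → ℝ) ⬝ᵥ (z : n → ℝ) = ∑ i, b.repr y i * b.repr z i := by
    intro y z
    have := b.repr.inner_map_map z y
    simp only [PiLp.inner_apply, RCLike.inner_apply, starRingEnd_apply, star_trivial] at this
    rw [show (y : n → ℝ) ⬝ᵥ (z : n → ℝ) = ∑ x, y x * z x from rfl, ← this]
  obtain ⟨j₀, hj₀⟩ := Finset.card_le_one_iff_subset_singleton.mp hcard
  obtain ⟨a0, b0, hab0, hker⟩ :
      ∃ a0 b0 : ℝ, ¬(a0 = 0 ∧ b0 = 0) ∧ a0 * b.repr w₁ j₀ + b0 * b.repr w₂ j₀ = 0 := by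
    by_cases h : b.repr w₁ j₀ = 0 ∧ b.repr w₂ j₀ = 0
    · exact ⟨1, 0, by norm_num, by simp [h.1, h.2]⟩
    · refine ⟨b.repr w₂ j₀, -(b.repr w₁ j₀), ?_, by ring⟩
      rintro ⟨h2, h3⟩
      exact h ⟨by linarith [neg_eq_zero.mp h3], h2⟩
  set x : EuclideanSpace ℝ n := a0 • w₁ + b0 • w₂ with hx
  have hcj : b.repr x j₀ = 0 := by
    rw [hx]
    simp only [map_add, _root_.map_smul, PiLp.add_apply, PiLp.smul_apply, smul_eq_mul]
    exact hker
  have key1 : (x : n → ℝ) ⬝ᵥ A *ᵥ (x : n → ℝ) = ∑ i, hA.eigenvalues i * (b.repr x i)^2 := by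
    rw [hinner x (WithLp.toLp 2 (A *ᵥ x))]
    congr 1; ext i
    rw [reprA]; ring
  have key2 : (x : n → ℝ) ⬝ᵥ (x : n → ℝ) = ∑ i, (b.repr x i)^2 := by
    rw [hinner x x]; congr 1; ext i; ring
  have hle : ∑ i, hA.eigenvalues i * (b.repr x i)^2 ≤ ∑ i, (b.repr x i)^2 := by
    apply Finset.sum_le_sum
    intro i _
    by_cases hij : i = j₀
    · subst hij; rw [hcj]; simp
    · have hi : i ∉ s := fun hin => hij (Finset.mem_singleton.mp (hj₀ hin))
      have : hA.eigenvalues i ≤ 1 := by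
        by_contra hgt
        exact hi (by rw [hs]; exact Finset.mem_filter.mpr ⟨Finset.mem_univ i, by linarith⟩)
      nlinarith [sq_nonneg (b.repr x i)]
  have := hpos a0 b0 hab0
  rw [← hx, key1, key2] at this
  linarith

lemma eigCount_ge_two {V : Type*} [Fintype V] [DecidableEq V] (G : SimpleGraph V)
    (w₁ w₂ : EuclideanSpace ℝ V)
    (hpos : ∀ (inst : DecidableRel G.Adj), ∀ a b : ℝ, ¬(a = 0 ∧ b = 0) →
      ((a • w₁ + b • w₂ : EuclideanSpace ℝ V) : V → ℝ) ⬝ᵥ ((a • w₁ + b • w₂ : EuclideanSpace ℝ V) : V → ℝ)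
        < ((a • w₁ + b • w₂ : EuclideanSpace ℝ V) : V → ℝ) ⬝ᵥ (@SimpleGraph.adjMatrix ℝ V G inst _ _) *ᵥ ((a • w₁ + b • w₂ : EuclideanSpace ℝ V) : V → ℝ)) :
    2 ≤ eigCount G (fun t => 1 < t) := by
  unfold eigCount
  exact key_spectral _ w₁ w₂ (hpos _)

end Aux

/-- if `G` is connected with `λ₂(G) ≤ 1`, has neither `K₅` nor `K_{3,3}` as a
minor, has girth `5`, and `x₀x₁x₂x₃x₄x₀` is a 5-cycle in `G`, then every vertex of `G` not
lying on the cycle is adjacent to exactly one vertex of the cycle. -/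
theorem girth_five_outside_vertex_unique_nbr {V : Type*} [Fintype V] [DecidableEq V]
    (G : SimpleGraph V) (hconn : G.Connected) (hl : eigCount G (fun t => 1 < t) ≤ 1)
    (hplanar : WagnerPlanar G) (hgirth : G.egirth = 5)
    (x : Fin 5 → V) (hinj : Function.Injective x) (hcyc : ∀ i, G.Adj (x i) (x (i + 1))) :
    ∀ v : V, v ∉ Set.range x → ∃! i : Fin 5, G.Adj v (x i) := by
  have h5 : (5:ℕ∞) ≤ G.egirth := le_of_eq hgirth.symm
  intro v hv
  have hex : ∃ i, G.Adj v (x i) := by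
    by_contra hne
    push_neg at hne
    set Bad : V → Prop := fun u => u ∉ Set.range x ∧ ∀ i, ¬ G.Adj u (x i) with hBad
    have hbv : Bad v := ⟨hv, hne⟩
    have hnb : ¬ Bad (x 0) := fun h => h.1 ⟨0, rfl⟩
    obtain ⟨p₀, p₁, hp₀, hadj, hp₁⟩ :=
      aux_walk_descent Bad ((hconn.preconnected v (x 0)).some) hbv hnb
    have hp₁r : p₁ ∉ Set.range x := by rintro ⟨i, rfl⟩; exact hp₀.2 i hadj
    obtain ⟨i₀, hi₀⟩ : ∃ i, G.Adj p₁ (x i) := by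
      by_contra h; push_neg at h; exact hp₁ ⟨hp₁r, h⟩
    set y : Fin 5 → V := fun j => x (i₀ + j) with hy
    have hyinj : Function.Injective y := fun j k h => add_left_cancel (hinj h)
    have hycyc : ∀ j, G.Adj (y j) (y (j+1)) := fun j => by
      have := hcyc (i₀ + j)
      rwa [show i₀ + j + 1 = i₀ + (j + 1) by open Fin.CommRing in ring] at this
    have hyr : ∀ u : V, u ∉ Set.range x → u ∉ Set.range y := by
      rintro u hu ⟨j, hj⟩; exact hu ⟨i₀ + j, hj⟩
    -- adjacencies among the seven special vertices
    have a01 : G.Adj (y 0) (y 1) := by simpa using hycyc 0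
    have a12 : G.Adj (y 1) (y 2) := by simpa using hycyc 1
    have a23 : G.Adj (y 2) (y 3) := by simpa using hycyc 2
    have a34 : G.Adj (y 3) (y 4) := by simpa using hycyc 3
    have a40 : G.Adj (y 4) (y 0) := by simpa using hycyc 4
    have ap : G.Adj p₁ (y 0) := by
      simp only [hy]
      rwa [add_zero]
    have app : G.Adj p₀ p₁ := hadj
    have hp1u : ∀ j, G.Adj p₁ (y j) → j = 0 := fun j hj =>
      aux_adj_unique h5 y hyinj hycyc (hyr p₁ hp₁r) hj ap
    have np1 : ¬ G.Adj p₁ (y 1) := fun h => by simpa using hp1u 1 h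
    have np2 : ¬ G.Adj p₁ (y 2) := fun h => by simpa using hp1u 2 h
    have np3 : ¬ G.Adj p₁ (y 3) := fun h => by simpa using hp1u 3 h
    have np4 : ¬ G.Adj p₁ (y 4) := fun h => by simpa using hp1u 4 h
    have m0 : ¬ G.Adj p₀ (y 0) := hp₀.2 (i₀ + 0)
    have m1 : ¬ G.Adj p₀ (y 1) := hp₀.2 (i₀ + 1)
    have m2 : ¬ G.Adj p₀ (y 2) := hp₀.2 (i₀ + 2)
    have m3 : ¬ G.Adj p₀ (y 3) := hp₀.2 (i₀ + 3)
    have m4 : ¬ G.Adj p₀ (y 4) := hp₀.2 (i₀ + 4)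
    have n02 : ¬ G.Adj (y 0) (y 2) := fun h => aux_no_C3 h5 a01 a12 h.symm
    have n03 : ¬ G.Adj (y 0) (y 3) := fun h => aux_no_C3 h5 h a34 a40
    have n13 : ¬ G.Adj (y 1) (y 3) := fun h => aux_no_C3 h5 a12 a23 h.symm
    have n14 : ¬ G.Adj (y 1) (y 4) := fun h => aux_no_C3 h5 h a40 a01
    have n24 : ¬ G.Adj (y 2) (y 4) := fun h => aux_no_C3 h5 a23 a34 h.symm
    -- distinctness
    have dp1 : ∀ j, p₁ ≠ y j := fun j h => hyr p₁ hp₁r ⟨j, h.symm⟩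
    have dp0 : ∀ j, p₀ ≠ y j := fun j h => hyr p₀ hp₀.1 ⟨j, h.symm⟩
    have dpp : p₀ ≠ p₁ := app.ne
    -- the two test vectors
    set w₁ : V → ℝ := Pi.single (y 1) 2 + Pi.single (y 2) 3 + Pi.single (y 3) 3 + Pi.single (y 4) 2 with hw₁
    set w₂ : V → ℝ := Pi.single (y 0) 2 + Pi.single p₁ 3 + Pi.single p₀ 2 with hw₂
    have h2le : 2 ≤ eigCount G (fun t => 1 < t) := by
      apply eigCount_ge_two G (WithLp.toLp 2 w₁) (WithLp.toLp 2 w₂)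
      intro inst a b hab
      show (a • w₁ + b • w₂ : V → ℝ) ⬝ᵥ (a • w₁ + b • w₂ : V → ℝ)
        < (a • w₁ + b • w₂ : V → ℝ) ⬝ᵥ (G.adjMatrix ℝ) *ᵥ (a • w₁ + b • w₂ : V → ℝ)
      have n02' : ¬ G.Adj _ _ := fun h => n02 h.symm
      have n03' : ¬ G.Adj _ _ := fun h => n03 h.symm
      have n13' : ¬ G.Adj _ _ := fun h => n13 h.symm
      have n14' : ¬ G.Adj _ _ := fun h => n14 h.symm
      have n24' : ¬ G.Adj _ _ := fun h => n24 h.symm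
      have np1' : ¬ G.Adj _ _ := fun h => np1 h.symm
      have np2' : ¬ G.Adj _ _ := fun h => np2 h.symm
      have np3' : ¬ G.Adj _ _ := fun h => np3 h.symm
      have np4' : ¬ G.Adj _ _ := fun h => np4 h.symm
      have m0' : ¬ G.Adj _ _ := fun h => m0 h.symm
      have m1' : ¬ G.Adj _ _ := fun h => m1 h.symm
      have m2' : ¬ G.Adj _ _ := fun h => m2 h.symm
      have m3' : ¬ G.Adj _ _ := fun h => m3 h.symm
      have m4' : ¬ G.Adj _ _ := fun h => m4 h.symm
      have hirr : ∀ u : V, ¬ G.Adj u u := fun u => G.irrefl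
      have hquad : (a • w₁ + b • w₂ : V → ℝ) ⬝ᵥ (G.adjMatrix ℝ) *ᵥ (a • w₁ + b • w₂ : V → ℝ)
          = 42*a^2 + 24*b^2 + 16*a*b := by
        rw [hw₁, hw₂]
        simp only [Matrix.mulVec_add, Matrix.mulVec_smul, Matrix.mulVec_single, Matrix.col_apply, op_smul_eq_mul,
          dotProduct_add, add_dotProduct, dotProduct_smul,
          smul_dotProduct, single_dotProduct, smul_eq_mul,
          SimpleGraph.adjMatrix_apply, hirr,
          a01, a12, a23, a34, a40, ap, app, a01.symm, a12.symm, a23.symm, a34.symm, a40.symm,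
          ap.symm, app.symm, n02, n03, n13, n14, n24, np1, np2, np3, np4, m0, m1, m2, m3, m4,
          if_true, if_false, n02', n03', n13', n14', n24', np1', np2', np3', np4',
          m0', m1', m2', m3', m4']
        ring
      have hnorm : (a • w₁ + b • w₂ : V → ℝ) ⬝ᵥ (a • w₁ + b • w₂ : V → ℝ)
          = 26*a^2 + 17*b^2 := by
        rw [hw₁, hw₂]
        simp only [dotProduct_add, add_dotProduct, dotProduct_smul,
          smul_dotProduct, single_dotProduct, smul_eq_mul,
          Pi.add_apply, Pi.single_apply,
          hyinj.ne (by decide : (1:Fin 5) ≠ 0), hyinj.ne (by decide : (1:Fin 5) ≠ 2),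
          hyinj.ne (by decide : (1:Fin 5) ≠ 3), hyinj.ne (by decide : (1:Fin 5) ≠ 4),
          hyinj.ne (by decide : (2:Fin 5) ≠ 0), hyinj.ne (by decide : (2:Fin 5) ≠ 1),
          hyinj.ne (by decide : (2:Fin 5) ≠ 3), hyinj.ne (by decide : (2:Fin 5) ≠ 4),
          hyinj.ne (by decide : (3:Fin 5) ≠ 0), hyinj.ne (by decide : (3:Fin 5) ≠ 1),
          hyinj.ne (by decide : (3:Fin 5) ≠ 2), hyinj.ne (by decide : (3:Fin 5) ≠ 4),
          hyinj.ne (by decide : (4:Fin 5) ≠ 0), hyinj.ne (by decide : (4:Fin 5) ≠ 1),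
          hyinj.ne (by decide : (4:Fin 5) ≠ 2), hyinj.ne (by decide : (4:Fin 5) ≠ 3),
          hyinj.ne (by decide : (0:Fin 5) ≠ 1), hyinj.ne (by decide : (0:Fin 5) ≠ 2),
          hyinj.ne (by decide : (0:Fin 5) ≠ 3), hyinj.ne (by decide : (0:Fin 5) ≠ 4),
          dp1 0, dp1 1, dp1 2, dp1 3, dp1 4, dp0 0, dp0 1, dp0 2, dp0 3, dp0 4, dpp,
          (dp1 0).symm, (dp1 1).symm, (dp1 2).symm, (dp1 3).symm, (dp1 4).symm,
          (dp0 0).symm, (dp0 1).symm, (dp0 2).symm, (dp0 3).symm, (dp0 4).symm, dpp.symm,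
          if_true, if_false]
        ring
      rw [hquad, hnorm]
      rcases not_and_or.mp hab with ha | hb
      · nlinarith [sq_nonneg (7*b + 8*a), mul_self_pos.mpr ha]
      · nlinarith [sq_nonneg (4*a + 2*b), mul_self_pos.mpr hb]
    omega
  obtain ⟨i, hi⟩ := hex
  exact ⟨i, hi, fun j hj => aux_adj_unique h5 x hinj hcyc hv hj hi⟩
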